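/- Let 𝕜 be a complete nontrivially normed field, s ∈ 𝕜, a ∈ 𝕜, c ∈ 𝕜 with c ≠ 0, and let g₁, g₂ : 𝕜 → 𝕜 be analytic at s. Let 𝓜 and Ξ be 2×2 matrices of functions analytic at s whose determinants are nonzero at s, and let C be the 2×2 matrix of functions with rows (z ↦ a, z ↦ c) and (z ↦ −φ(z), z ↦ 0), where φ is analytic at s with φ(s) = 0 and deriv φ s ≠ 0. Define (h₁, h₂) to be the row vector (g₁, g₂) multiplied (pointwise, on a neighborhood of s) by the matrix product 𝓜·C·Ξ. Set d := min(ord_s h₁, ord_s h₂) and e := min(ord_s g₁, ord_s g₂). Then d = e or d = e + 1. -/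

import Mathlib

open Filter Topology

section OrderLemmas

variable {𝕜 : Type*} [NontriviallyNormedField 𝕜] {s : 𝕜}

/-- Order of vanishing of an analytic function (compatibility wrapper). -/
noncomputable def AnalyticAt.order {f : 𝕜 → 𝕜} (_hf : AnalyticAt 𝕜 f s) : ℕ∞ :=
  analyticOrderAt f s

theorem AnalyticAt.order_eq_top_iff {f : 𝕜 → 𝕜} (hf : AnalyticAt 𝕜 f s) :
    hf.order = ⊤ ↔ ∀ᶠ z in 𝓝 s, f z = 0 :=
  analyticOrderAt_eq_top

theorem AnalyticAt.order_eq_nat_iff {f : 𝕜 → 𝕜} (hf : AnalyticAt 𝕜 f s) (n : ℕ) :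
    hf.order = n ↔
      ∃ g : 𝕜 → 𝕜, AnalyticAt 𝕜 g s ∧ g s ≠ 0 ∧ ∀ᶠ z in 𝓝 s, f z = (z - s) ^ n • g z :=
  hf.analyticOrderAt_eq_natCast

private lemma order_congr' {f g : 𝕜 → 𝕜} (hf : AnalyticAt 𝕜 f s) (hg : AnalyticAt 𝕜 g s)
    (h : ∀ᶠ z in 𝓝 s, f z = g z) : hf.order = hg.order := by
  rcases eq_or_ne hf.order ⊤ with ht | ht
  · rw [ht, eq_comm, AnalyticAt.order_eq_top_iff]
    rw [AnalyticAt.order_eq_top_iff] at ht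
    filter_upwards [ht, h] with z hz he
    rw [← he, hz]
  · obtain ⟨n, hn⟩ : ∃ n : ℕ, hf.order = n := by
      cases h' : hf.order with
      | top => exact absurd h' ht
      | coe n => exact ⟨n, rfl⟩
    obtain ⟨F, hF, hFs, hfF⟩ := (hf.order_eq_nat_iff n).mp hn
    rw [hn, eq_comm, AnalyticAt.order_eq_nat_iff]
    refine ⟨F, hF, hFs, ?_⟩
    filter_upwards [hfF, h] with z h1 h2
    rw [← h2, h1]

private lemma order_mul' {f g : 𝕜 → 𝕜} (hf : AnalyticAt 𝕜 f s) (hg : AnalyticAt 𝕜 g s)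
    (hfg : AnalyticAt 𝕜 (fun z => f z * g z) s) : hfg.order = hf.order + hg.order := by
  rcases eq_or_ne hf.order ⊤ with ht | ht
  · rw [ht, top_add, AnalyticAt.order_eq_top_iff]
    rw [AnalyticAt.order_eq_top_iff] at ht
    filter_upwards [ht] with z hz
    simp [hz]
  rcases eq_or_ne hg.order ⊤ with ht' | ht'
  · rw [ht', add_top, AnalyticAt.order_eq_top_iff]
    rw [AnalyticAt.order_eq_top_iff] at ht'
    filter_upwards [ht'] with z hz
    simp [hz]
  obtain ⟨m, hm⟩ : ∃ m : ℕ, hf.order = m := by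
    cases h' : hf.order with
    | top => exact absurd h' ht
    | coe m => exact ⟨m, rfl⟩
  obtain ⟨n, hn⟩ : ∃ n : ℕ, hg.order = n := by
    cases h' : hg.order with
    | top => exact absurd h' ht'
    | coe n => exact ⟨n, rfl⟩
  obtain ⟨F, hF, hFs, hfF⟩ := (hf.order_eq_nat_iff m).mp hm
  obtain ⟨G, hG, hGs, hgG⟩ := (hg.order_eq_nat_iff n).mp hn
  rw [hm, hn, ← Nat.cast_add, AnalyticAt.order_eq_nat_iff]
  refine ⟨fun z => F z * G z, hF.mul hG, mul_ne_zero hFs hGs, ?_⟩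
  filter_upwards [hfF, hgG] with z h1 h2
  rw [h1, h2]
  simp only [smul_eq_mul, pow_add]
  ring

private lemma order_zero_of_ne {f : 𝕜 → 𝕜} (hf : AnalyticAt 𝕜 f s) (h : f s ≠ 0) :
    hf.order = 0 := by
  rw [show ((0 : ℕ∞)) = ((0 : ℕ) : ℕ∞) from rfl, AnalyticAt.order_eq_nat_iff]
  exact ⟨f, hf, h, by filter_upwards with z; simp⟩

private lemma order_centered_pow (n : ℕ)
    (h : AnalyticAt 𝕜 (fun z => (z - s) ^ n) s) : h.order = n := by
  rw [AnalyticAt.order_eq_nat_iff]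
  exact ⟨fun _ => 1, analyticAt_const, one_ne_zero, by filter_upwards with z; simp⟩

private lemma le_order_iff' {f : 𝕜 → 𝕜} (hf : AnalyticAt 𝕜 f s) (n : ℕ) :
    (n : ℕ∞) ≤ hf.order ↔
      ∃ G : 𝕜 → 𝕜, AnalyticAt 𝕜 G s ∧ ∀ᶠ z in 𝓝 s, f z = (z - s) ^ n * G z := by
  constructor
  · intro h
    rcases eq_or_ne hf.order ⊤ with ht | ht
    · refine ⟨fun _ => 0, analyticAt_const, ?_⟩
      rw [AnalyticAt.order_eq_top_iff] at ht
      filter_upwards [ht] with z hz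
      simp [hz]
    · obtain ⟨m, hm⟩ : ∃ m : ℕ, hf.order = m := by
        cases h' : hf.order with
        | top => exact absurd h' ht
        | coe m => exact ⟨m, rfl⟩
      obtain ⟨F, hF, hFs, hfF⟩ := (hf.order_eq_nat_iff m).mp hm
      have hnm : n ≤ m := by
        rw [hm] at h
        exact_mod_cast h
      refine ⟨fun z => (z - s) ^ (m - n) * F z,
        ((analyticAt_id.sub analyticAt_const).pow _).mul hF, ?_⟩
      filter_upwards [hfF] with z hz
      rw [hz, smul_eq_mul, ← mul_assoc, ← pow_add, Nat.add_sub_cancel' hnm]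
  · rintro ⟨G, hG, hfG⟩
    have hpow : AnalyticAt 𝕜 (fun z => (z - s) ^ n) s :=
      (analyticAt_id.sub analyticAt_const).pow n
    have h1 : hf.order = (hpow.mul hG).order := order_congr' hf (hpow.mul hG) hfG
    rw [h1, order_mul' hpow hG, order_centered_pow n hpow]
    exact le_self_add

private lemma min_le_order_add {f g : 𝕜 → 𝕜} (hf : AnalyticAt 𝕜 f s) (hg : AnalyticAt 𝕜 g s)
    (hfg : AnalyticAt 𝕜 (fun z => f z + g z) s) :
    min hf.order hg.order ≤ hfg.order := by
  rcases eq_or_ne (min hf.order hg.order) ⊤ with ht | ht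
  · have hft : hf.order = ⊤ := le_antisymm le_top (ht ▸ min_le_left _ _)
    have hgt : hg.order = ⊤ := le_antisymm le_top (ht ▸ min_le_right _ _)
    rw [ht, top_le_iff, AnalyticAt.order_eq_top_iff]
    rw [AnalyticAt.order_eq_top_iff] at hft hgt
    filter_upwards [hft, hgt] with z h1 h2
    simp [h1, h2]
  · obtain ⟨n, hn⟩ : ∃ n : ℕ, min hf.order hg.order = n := by
      cases h' : min hf.order hg.order with
      | top => exact absurd h' ht
      | coe n => exact ⟨n, rfl⟩
    obtain ⟨F, hF, hfF⟩ := (le_order_iff' hf n).mp (hn ▸ min_le_left _ _)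
    obtain ⟨G, hG, hgG⟩ := (le_order_iff' hg n).mp (hn ▸ min_le_right _ _)
    rw [hn]
    rw [le_order_iff' hfg n]
    refine ⟨fun z => F z + G z, hF.add hG, ?_⟩
    filter_upwards [hfF, hgG] with z h1 h2
    rw [h1, h2]
    ring

private lemma order_neg' {f : 𝕜 → 𝕜} (hf : AnalyticAt 𝕜 f s)
    (hnf : AnalyticAt 𝕜 (fun z => -f z) s) : hnf.order = hf.order := by
  have hc : AnalyticAt 𝕜 (fun _ : 𝕜 => (-1 : 𝕜)) s := analyticAt_const
  have h1 : hnf.order = (hc.mul hf).order :=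
    order_congr' _ _ (by filter_upwards with z; simp only [Pi.mul_apply]; ring)
  rw [h1, order_mul' hc hf, order_zero_of_ne hc (by norm_num), zero_add]

private lemma order_add_of_lt {f g : 𝕜 → 𝕜} (hf : AnalyticAt 𝕜 f s) (hg : AnalyticAt 𝕜 g s)
    (hfg : AnalyticAt 𝕜 (fun z => f z + g z) s) (h : hf.order < hg.order) :
    hfg.order = hf.order := by
  refine le_antisymm ?_ ?_
  · have hng : AnalyticAt 𝕜 (fun z => -g z) s := hg.neg
    have hsum : AnalyticAt 𝕜 (fun z => (f z + g z) + (-g z)) s := hfg.add hng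
    have h1 : hf.order = hsum.order :=
      order_congr' _ _ (by filter_upwards with z; ring)
    have h2 : min hfg.order hng.order ≤ hsum.order := min_le_order_add hfg hng hsum
    rw [← h1, order_neg' hg hng] at h2
    rcases min_le_iff.mp h2 with h3 | h3
    · exact h3
    · exact absurd h3 (not_le_of_gt h)
  · have := min_le_order_add hf hg hfg
    rwa [min_eq_left h.le] at this

/-- Lower bound for the minimal order of a linear combination with analytic coefficients. -/
private lemma min_order_le_comb {g₁ g₂ α β γ δ u₁ u₂ : 𝕜 → 𝕜}
    (hg₁ : AnalyticAt 𝕜 g₁ s) (hg₂ : AnalyticAt 𝕜 g₂ s)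
    (hα : AnalyticAt 𝕜 α s) (hβ : AnalyticAt 𝕜 β s)
    (hγ : AnalyticAt 𝕜 γ s) (hδ : AnalyticAt 𝕜 δ s)
    (hu₁ : AnalyticAt 𝕜 u₁ s) (hu₂ : AnalyticAt 𝕜 u₂ s)
    (e₁ : ∀ᶠ z in 𝓝 s, u₁ z = g₁ z * α z + g₂ z * γ z)
    (e₂ : ∀ᶠ z in 𝓝 s, u₂ z = g₁ z * β z + g₂ z * δ z) :
    min hg₁.order hg₂.order ≤ min hu₁.order hu₂.order := by
  have key : ∀ (p q u : 𝕜 → 𝕜) (hp : AnalyticAt 𝕜 p s) (hq : AnalyticAt 𝕜 q s)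
      (hu : AnalyticAt 𝕜 u s), (∀ᶠ z in 𝓝 s, u z = g₁ z * p z + g₂ z * q z) →
      min hg₁.order hg₂.order ≤ hu.order := by
    intro p q u hp hq hu he
    have h1 : hu.order = ((hg₁.mul hp).add (hg₂.mul hq)).order :=
      order_congr' _ _ he
    rw [h1]
    refine le_trans ?_ (min_le_order_add (hg₁.mul hp) (hg₂.mul hq) _)
    rw [order_mul' hg₁ hp, order_mul' hg₂ hq]
    exact min_le_min le_self_add le_self_add
  exact le_min (key α γ u₁ hα hγ hu₁ e₁) (key β δ u₂ hβ hδ hu₂ e₂)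

/-- If the matrix of coefficients has nonvanishing determinant at `s`, the minimal order is
preserved. -/
private lemma min_order_comb_eq {g₁ g₂ α β γ δ u₁ u₂ : 𝕜 → 𝕜}
    (hg₁ : AnalyticAt 𝕜 g₁ s) (hg₂ : AnalyticAt 𝕜 g₂ s)
    (hα : AnalyticAt 𝕜 α s) (hβ : AnalyticAt 𝕜 β s)
    (hγ : AnalyticAt 𝕜 γ s) (hδ : AnalyticAt 𝕜 δ s)
    (hu₁ : AnalyticAt 𝕜 u₁ s) (hu₂ : AnalyticAt 𝕜 u₂ s)
    (e₁ : ∀ᶠ z in 𝓝 s, u₁ z = g₁ z * α z + g₂ z * γ z)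
    (e₂ : ∀ᶠ z in 𝓝 s, u₂ z = g₁ z * β z + g₂ z * δ z)
    (hdet : α s * δ s - β s * γ s ≠ 0) :
    min hu₁.order hu₂.order = min hg₁.order hg₂.order := by
  refine le_antisymm ?_ (min_order_le_comb hg₁ hg₂ hα hβ hγ hδ hu₁ hu₂ e₁ e₂)
  have hd : AnalyticAt 𝕜 (fun z => α z * δ z - β z * γ z) s :=
    (hα.mul hδ).sub (hβ.mul hγ)
  have hdne : ∀ᶠ z in 𝓝 s, α z * δ z - β z * γ z ≠ 0 :=
    hd.continuousAt.eventually_ne hdet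
  have hdi : AnalyticAt 𝕜 (fun z => (α z * δ z - β z * γ z)⁻¹) s := hd.inv hdet
  refine min_order_le_comb hu₁ hu₂
    (hδ.mul hdi) ((hβ.neg).mul hdi) ((hγ.neg).mul hdi) (hα.mul hdi) hg₁ hg₂ ?_ ?_
  · filter_upwards [e₁, e₂, hdne] with z h1 h2 h3
    rw [h1, h2]
    simp only [Pi.mul_apply, Pi.neg_apply]
    have h3' : α z * δ z - γ z * β z ≠ 0 := by rwa [mul_comm (γ z)]
    field_simp
    ring
  · filter_upwards [e₁, e₂, hdne] with z h1 h2 h3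
    rw [h1, h2]
    simp only [Pi.mul_apply, Pi.neg_apply]
    have h3' : α z * δ z - γ z * β z ≠ 0 := by rwa [mul_comm (γ z)]
    field_simp
    ring

/-- A function with a simple zero has order one. -/
private lemma order_simple_zero {φ : 𝕜 → 𝕜} (hφ : AnalyticAt 𝕜 φ s) (hφ₀ : φ s = 0)
    (hφ' : deriv φ s ≠ 0) : hφ.order = 1 := by
  obtain ⟨p, hp⟩ := id hφ
  have hds : AnalyticAt 𝕜 (dslope φ s) s := ⟨_, hp.has_fpower_series_dslope_fslope⟩
  rw [show ((1 : ℕ∞)) = ((1 : ℕ) : ℕ∞) from rfl, AnalyticAt.order_eq_nat_iff]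
  refine ⟨dslope φ s, hds, by rwa [dslope_same], ?_⟩
  filter_upwards with z
  rcases eq_or_ne z s with rfl | hz
  · simp [hφ₀]
  · rw [dslope_of_ne _ hz, slope_def_field, hφ₀]
    simp only [smul_eq_mul, pow_one, sub_zero]
    field_simp [sub_ne_zero.mpr hz]

end OrderLemmas

/-- Analytic content of Proposition 5.1: if `(h₁, h₂) = (g₁, g₂)·(𝓜·C·Ξ)` near `s`,
where `𝓜` and `Ξ` are matrices of functions analytic at `s` with determinants
nonvanishing at `s` and `C` has rows `(a, c)` and `(−φ, 0)` with `φ` having a simple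
zero at `s` and `c ≠ 0`, then the minimal order of vanishing of `(h₁, h₂)` at `s`
equals that of `(g₁, g₂)` or that of `(g₁, g₂)` plus 1. -/
theorem min_order_matrix_product_simple_zero
    {𝕜 : Type*} [NontriviallyNormedField 𝕜] [CompleteSpace 𝕜]
    {s a c : 𝕜} (hc : c ≠ 0)
    {g₁ g₂ φ h₁ h₂ : 𝕜 → 𝕜}
    (hg₁ : AnalyticAt 𝕜 g₁ s) (hg₂ : AnalyticAt 𝕜 g₂ s)
    (hφ : AnalyticAt 𝕜 φ s) (hφ₀ : φ s = 0) (hφ' : deriv φ s ≠ 0)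
    {M Ξ : 𝕜 → Matrix (Fin 2) (Fin 2) 𝕜}
    (hM : ∀ i j, AnalyticAt 𝕜 (fun z => M z i j) s)
    (hΞ : ∀ i j, AnalyticAt 𝕜 (fun z => Ξ z i j) s)
    (hMdet : (M s).det ≠ 0) (hΞdet : (Ξ s).det ≠ 0)
    (hrel : ∀ᶠ z in 𝓝 s,
      ![h₁ z, h₂ z] =
        Matrix.vecMul ![g₁ z, g₂ z] (M z * !![a, c; -φ z, 0] * Ξ z))
    (hh₁ : AnalyticAt 𝕜 h₁ s) (hh₂ : AnalyticAt 𝕜 h₂ s) :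
    min (analyticOrderAt h₁ s) (analyticOrderAt h₂ s) = min (analyticOrderAt g₁ s) (analyticOrderAt g₂ s) ∨
      min (analyticOrderAt h₁ s) (analyticOrderAt h₂ s) = min (analyticOrderAt g₁ s) (analyticOrderAt g₂ s) + 1 := by
  classical
  change min hh₁.order hh₂.order = min hg₁.order hg₂.order ∨
    min hh₁.order hh₂.order = min hg₁.order hg₂.order + 1
  -- the intermediate vectors
  set u₁ : 𝕜 → 𝕜 := fun z => g₁ z * M z 0 0 + g₂ z * M z 1 0 with hu₁def
  set u₂ : 𝕜 → 𝕜 := fun z => g₁ z * M z 0 1 + g₂ z * M z 1 1 with hu₂def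
  have hu₁ : AnalyticAt 𝕜 u₁ s := (hg₁.mul (hM 0 0)).add (hg₂.mul (hM 1 0))
  have hu₂ : AnalyticAt 𝕜 u₂ s := (hg₁.mul (hM 0 1)).add (hg₂.mul (hM 1 1))
  set v₁ : 𝕜 → 𝕜 := fun z => u₁ z * a + u₂ z * (-φ z) with hv₁def
  set v₂ : 𝕜 → 𝕜 := fun z => u₁ z * c with hv₂def
  have hv₁ : AnalyticAt 𝕜 v₁ s := (hu₁.mul analyticAt_const).add (hu₂.mul hφ.neg)
  have hv₂ : AnalyticAt 𝕜 v₂ s := hu₁.mul analyticAt_const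
  -- the components of hrel
  have eh₁ : ∀ᶠ z in 𝓝 s, h₁ z = v₁ z * Ξ z 0 0 + v₂ z * Ξ z 1 0 := by
    filter_upwards [hrel] with z hz
    have h0 := congrFun hz 0
    simp only [Matrix.cons_val_zero] at h0
    rw [h0, hv₁def, hv₂def, hu₁def, hu₂def]
    simp [Matrix.vecMul, dotProduct, Matrix.mul_apply, Fin.sum_univ_two]
    ring
  have eh₂ : ∀ᶠ z in 𝓝 s, h₂ z = v₁ z * Ξ z 0 1 + v₂ z * Ξ z 1 1 := by
    filter_upwards [hrel] with z hz
    have h0 := congrFun hz 1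
    simp only [Matrix.cons_val_one, Matrix.head_cons, Matrix.cons_val_zero] at h0
    rw [h0, hv₁def, hv₂def, hu₁def, hu₂def]
    simp [Matrix.vecMul, dotProduct, Matrix.mul_apply, Fin.sum_univ_two]
    ring
  -- step 1 : min order of u equals min order of g
  have step1 : min hu₁.order hu₂.order = min hg₁.order hg₂.order := by
    refine min_order_comb_eq hg₁ hg₂ (hM 0 0) (hM 0 1) (hM 1 0) (hM 1 1) hu₁ hu₂
      (by filter_upwards with z; rfl) (by filter_upwards with z; rfl) ?_
    rwa [Matrix.det_fin_two] at hMdet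
  -- step 3 : min order of h equals min order of v
  have step3 : min hh₁.order hh₂.order = min hv₁.order hv₂.order := by
    refine min_order_comb_eq hv₁ hv₂ (hΞ 0 0) (hΞ 0 1) (hΞ 1 0) (hΞ 1 1) hh₁ hh₂ eh₁ eh₂ ?_
    rwa [Matrix.det_fin_two] at hΞdet
  -- orders of auxiliary products
  have hca : AnalyticAt 𝕜 (fun _ : 𝕜 => a) s := analyticAt_const
  have hcc : AnalyticAt 𝕜 (fun _ : 𝕜 => c) s := analyticAt_const
  have hv₂ord : hv₂.order = hu₁.order := by
    rw [order_mul' hu₁ hcc, order_zero_of_ne hcc hc, add_zero]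
  have hφ1 : hφ.order = 1 := order_simple_zero hφ hφ₀ hφ'
  have hnφ : AnalyticAt 𝕜 (fun z => -φ z) s := hφ.neg
  have hu₂φ : AnalyticAt 𝕜 (fun z => u₂ z * (-φ z)) s := hu₂.mul hnφ
  have hu₂φord : hu₂φ.order = hu₂.order + 1 := by
    rw [order_mul' hu₂ hnφ, order_neg' hφ hnφ, hφ1]
  have hu₁a : AnalyticAt 𝕜 (fun z => u₁ z * a) s := hu₁.mul hca
  have hu₁aord : hu₁.order ≤ hu₁a.order := by
    rw [order_mul' hu₁ hca]
    exact le_self_add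
  -- step 2 : case analysis
  rcases le_or_gt hu₁.order hu₂.order with hAB | hAB
  · -- min order of v is hu₁.order; conclude with the left disjunct
    left
    have hv₁ord : hu₁.order ≤ hv₁.order := by
      refine le_trans ?_ (min_le_order_add hu₁a hu₂φ hv₁)
      rw [hu₂φord]
      exact le_min hu₁aord (le_trans hAB le_self_add)
    rw [step3, ← step1, min_eq_left hAB]
    exact le_antisymm (le_trans (min_le_right _ _) hv₂ord.le) (le_min hv₁ord hv₂ord.ge)
  · -- min order of v is hu₂.order + 1; conclude with the right disjunct
    right
    have hB : hu₂.order ≠ ⊤ := (lt_of_lt_of_le hAB le_top).ne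
    have hBA : hu₂.order + 1 ≤ hu₁.order := (ENat.add_one_le_iff hB).mpr hAB
    have hv₁ge : hu₂.order + 1 ≤ hv₁.order := by
      refine le_trans ?_ (min_le_order_add hu₁a hu₂φ hv₁)
      rw [hu₂φord]
      exact le_min (le_trans hBA hu₁aord) le_rfl
    have hmin : min hv₁.order hv₂.order = hu₂.order + 1 := by
      rcases eq_or_lt_of_le hBA with heq | hlt
      · -- hu₁.order = hu₂.order + 1, use v₂
        refine le_antisymm ?_ (le_min hv₁ge (hv₂ord ▸ hBA))
        rw [heq, ← hv₂ord]
        exact min_le_right _ _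
      · -- hu₁.order > hu₂.order + 1, v₁ has order exactly hu₂.order + 1
        have hsum : AnalyticAt 𝕜 (fun z => u₂ z * (-φ z) + u₁ z * a) s := hu₂φ.add hu₁a
        have hv₁eq : hv₁.order = hu₂.order + 1 := by
          have h1 : hv₁.order = hsum.order :=
            order_congr' _ _ (by filter_upwards with z; rw [hv₁def]; ring)
          rw [h1, order_add_of_lt hu₂φ hu₁a hsum
            (by rw [hu₂φord]; exact lt_of_lt_of_le hlt hu₁aord), hu₂φord]
        rw [hv₁eq] at hv₁ge ⊢
        exact le_antisymm (min_le_left _ _) (le_min le_rfl (hv₂ord ▸ hBA))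
    rw [step3, hmin, ← step1, min_eq_right hAB.le]
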